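/- Let N ≥ 3 and let a_0, …, a_{N-2} be positive reals with a_j = a_{N-2-j} for all j. Define the polynomial P(u) = (1+u)[(Σ_{j=0}^{N-2} a_j u^j)(Σ_{j=1}^{N-1} j u^{j-1}) − (Σ_{j=1}^{N-2} a_j j u^{j-1})(Σ_{j=0}^{N-1} u^j)] − (Σ_{j=0}^{N-2} a_j u^j)(Σ_{j=0}^{N-1} u^j). Then P has degree 2N−4 with leading coefficient a_{N-3} > 0, and its coefficients p_k satisfy p_k = −p_{2N-4-k} for 0 ≤ k ≤ 2N−4; in particular p_{N-2} = 0 and P(1) = 0. -/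

import Mathlib

open Polynomial

lemma reflect_sub' (f g : ℝ[X]) (N : ℕ) :
    reflect N (f - g) = reflect N f - reflect N g := by
  ext i
  simp [coeff_reflect, coeff_sub]

lemma coeff_X_mul_derivative (p : ℝ[X]) (k : ℕ) :
    (X * derivative p).coeff k = k * p.coeff k := by
  cases k with
  | zero => simp
  | succ k => rw [coeff_X_mul, coeff_derivative]; push_cast; ring

lemma reflect_derivative' (p : ℝ[X]) (M : ℕ) (hp : reflect (M+1) p = p)
    (hd : p.natDegree ≤ M+1) :
    reflect M (derivative p) = C ((M+1 : ℕ) : ℝ) * p - X * derivative p := by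
  have hpal : ∀ i, i ≤ M+1 → p.coeff (M+1-i) = p.coeff i := by
    intro i hi
    conv_rhs => rw [← hp]
    rw [coeff_reflect, revAt_le hi]
  ext k
  rw [coeff_reflect, coeff_sub, coeff_C_mul, coeff_X_mul_derivative]
  rcases le_or_gt k M with hk | hk
  · rw [revAt_le hk, coeff_derivative]
    rw [show M - k + 1 = M + 1 - k from by omega, hpal k (by omega)]
    rw [Nat.cast_sub hk]
    push_cast
    ring
  · rw [revAt_eq_self_of_lt hk, coeff_derivative]
    have h0 : p.coeff (k+1) = 0 := coeff_eq_zero_of_natDegree_lt (by omega)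
    rcases eq_or_lt_of_le (Nat.succ_le_of_lt hk) with he | hgt
    · rw [h0, ← he]
      push_cast
      ring
    · have h2 : p.coeff k = 0 := coeff_eq_zero_of_natDegree_lt (by omega)
      rw [h0, h2]
      ring

open Polynomial in
theorem P_antisymmetric (N : ℕ) (hN : 3 ≤ N) (m A : ℕ → ℝ)
    (hm_pos : ∀ j : ℕ, j ≤ N - 2 → 0 < m j)
    (hm_sym : ∀ j : ℕ, j ≤ N - 2 → m j = m (N - 2 - j))
    (hA : ∀ j : ℕ, j ≤ N - 2 → A j = (∑ i ∈ Finset.range (N - 1), m i) + m j)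
    (P : Polynomial ℝ)
    (hP : P = (1 + X) *
        ((∑ j ∈ Finset.range (N - 1), C (A j) * X ^ j) *
            (∑ j ∈ Finset.Icc 1 (N - 1), C (j : ℝ) * X ^ (j - 1)) -
          (∑ j ∈ Finset.Icc 1 (N - 2), C (A j * j) * X ^ (j - 1)) *
            (∑ j ∈ Finset.range N, X ^ j)) -
      (∑ j ∈ Finset.range (N - 1), C (A j) * X ^ j) *
        (∑ j ∈ Finset.range N, X ^ j)) :
    P.natDegree = 2 * N - 4 ∧
    P.coeff (2 * N - 4) = A (N - 3) ∧ 0 < A (N - 3) ∧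
    (∀ k : ℕ, k ≤ 2 * N - 4 → P.coeff k = -P.coeff (2 * N - 4 - k)) ∧
    P.coeff (N - 2) = 0 ∧ P.eval 1 = 0 := by
  obtain ⟨n, rfl⟩ : ∃ n, N = n + 3 := ⟨N - 3, by omega⟩
  simp only [show n + 3 - 1 = n + 2 from by omega, show n + 3 - 2 = n + 1 from by omega,
    show 2 * (n + 3) - 4 = 2 * n + 2 from by omega, show n + 3 - 3 = n from by omega]
    at hm_pos hm_sym hA hP ⊢
  set S : ℝ[X] := ∑ j ∈ Finset.range (n + 2), C (A j) * X ^ j with hS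
  set G : ℝ[X] := ∑ j ∈ Finset.range (n + 3), X ^ j with hG
  set D : ℝ[X] := ∑ j ∈ Finset.Icc 1 (n + 2), C ((j : ℕ) : ℝ) * X ^ (j - 1) with hDdef
  set T : ℝ[X] := ∑ j ∈ Finset.Icc 1 (n + 1), C (A j * j) * X ^ (j - 1) with hTdef
  -- symmetry of A
  have hAsym : ∀ j, j ≤ n + 1 → A j = A (n + 1 - j) := by
    intro j hj
    rw [hA j hj, hA (n + 1 - j) (by omega), hm_sym j hj]
  -- coefficient formulas
  have hcoeffS : ∀ k, S.coeff k = if k < n + 2 then A k else 0 := by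
    intro k
    rw [hS, finset_sum_coeff]
    simp only [coeff_C_mul, coeff_X_pow, mul_ite, mul_one, mul_zero]
    rw [Finset.sum_ite_eq]
    simp [Finset.mem_range]
  have hcoeffG : ∀ k, G.coeff k = if k < n + 3 then 1 else 0 := by
    intro k
    rw [hG, finset_sum_coeff]
    simp only [coeff_X_pow]
    rw [Finset.sum_ite_eq]
    simp [Finset.mem_range]
  -- degree bounds
  have hSdeg : S.natDegree ≤ n + 1 := by
    rw [hS]
    apply natDegree_sum_le_of_forall_le
    intro j hj
    exact le_trans (natDegree_C_mul_X_pow_le _ _) (by simp at hj; omega)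
  have hGdeg : G.natDegree ≤ n + 2 := by
    rw [hG]
    apply natDegree_sum_le_of_forall_le
    intro j hj
    rw [natDegree_X_pow]
    simp at hj; omega
  -- D and T are derivatives
  have hD : D = derivative G := by
    rw [hG, derivative_sum]
    simp only [derivative_X_pow]
    rw [hDdef]
    apply Finset.sum_subset
    · intro j hj
      simp only [Finset.mem_Icc, Finset.mem_range] at *
      omega
    · intro j hj hj'
      have hj0 : j = 0 := by
        simp only [Finset.mem_Icc, Finset.mem_range] at *
        omega
      subst hj0
      simp
  have hT : T = derivative S := by
    rw [hS, derivative_sum]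
    simp only [derivative_C_mul, derivative_X_pow]
    rw [hTdef]
    have : ∀ j : ℕ, C (A j * j) * X ^ (j - 1) = C (A j) * (C ((j : ℕ) : ℝ) * X ^ (j - 1)) := by
      intro j
      rw [C_mul, mul_assoc]
    simp only [this]
    apply Finset.sum_subset
    · intro j hj
      simp only [Finset.mem_Icc, Finset.mem_range] at *
      omega
    · intro j hj hj'
      have hj0 : j = 0 := by
        simp only [Finset.mem_Icc, Finset.mem_range] at *
        omega
      subst hj0
      simp
  have hDdeg : D.natDegree ≤ n + 1 := by
    rw [hD]
    have := natDegree_derivative_le G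
    omega
  have hTdeg : T.natDegree ≤ n := by
    rw [hT]
    have := natDegree_derivative_le S
    omega
  -- palindromy
  have hSrefl : reflect (n + 1) S = S := by
    ext k
    rw [coeff_reflect]
    rcases le_or_gt k (n + 1) with hk | hk
    · rw [revAt_le hk, hcoeffS, hcoeffS, if_pos (by omega), if_pos (by omega)]
      exact (hAsym k hk).symm
    · rw [revAt_eq_self_of_lt hk]
  have hGrefl : reflect (n + 2) G = G := by
    ext k
    rw [coeff_reflect]
    rcases le_or_gt k (n + 2) with hk | hk
    · rw [revAt_le hk, hcoeffG, hcoeffG, if_pos (by omega), if_pos (by omega)]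
    · rw [revAt_eq_self_of_lt hk]
  have hDrefl : reflect (n + 1) D = C ((n + 2 : ℕ) : ℝ) * G - X * D := by
    rw [hD]
    exact reflect_derivative' G (n + 1) hGrefl hGdeg
  have hTrefl : reflect n T = C ((n + 1 : ℕ) : ℝ) * S - X * T := by
    rw [hT]
    exact reflect_derivative' S n hSrefl hSdeg
  -- W
  set W : ℝ[X] := S * D - T * G with hW
  have hWdeg : W.natDegree ≤ 2 * n + 2 := by
    rw [hW]
    apply le_trans (natDegree_sub_le _ _)
    have h1 := natDegree_mul_le (p := S) (q := D)
    have h2 := natDegree_mul_le (p := T) (q := G)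
    omega
  have hWrefl : reflect (2 * n + 2) W = S * G - X * W := by
    have hSD : reflect (2 * n + 2) (S * D) = S * (C ((n + 2 : ℕ) : ℝ) * G - X * D) := by
      rw [show 2 * n + 2 = (n + 1) + (n + 1) from by ring, reflect_mul S D hSdeg hDdeg,
        hSrefl, hDrefl]
    have hTG : reflect (2 * n + 2) (T * G) = (C ((n + 1 : ℕ) : ℝ) * S - X * T) * G := by
      rw [show 2 * n + 2 = n + (n + 2) from by ring, reflect_mul T G hTdeg hGdeg,
        hTrefl, hGrefl]
    rw [hW, reflect_sub', hSD, hTG]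
    simp only [map_natCast]
    push_cast
    ring
  have hXdeg : (1 + X : ℝ[X]).natDegree ≤ 1 := le_trans (natDegree_add_le _ _) (by simp)
  have honeX : reflect 1 (1 + X : ℝ[X]) = 1 + X := by
    have h1 : (1 + X : ℝ[X]) = X ^ 0 + X ^ 1 := by rw [pow_zero, pow_one]
    rw [h1, reflect_add, reflect_monomial, reflect_monomial, revAt_zero,
      revAt_le (le_refl 1)]
    rw [pow_zero, pow_one]
    ring
  have hPdeg3 : P.natDegree ≤ 2 * n + 3 := by
    rw [hP]
    apply le_trans (natDegree_sub_le _ _)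
    have h1 := natDegree_mul_le (p := (1 + X : ℝ[X])) (q := W)
    have h2 := natDegree_mul_le (p := S) (q := G)
    omega
  have hPrefl : reflect (2 * n + 3) P = -(X * P) := by
    rw [hP, reflect_sub']
    rw [show 2 * n + 3 = 1 + (2 * n + 2) from by ring,
      reflect_mul _ _ hXdeg hWdeg, honeX, hWrefl,
      show 1 + (2 * n + 2) = (n + 1) + (n + 2) from by ring,
      reflect_mul S G hSdeg hGdeg, hSrefl, hGrefl]
    ring
  -- antisymmetry of coefficients
  have hanti : ∀ k, k ≤ 2 * n + 2 → P.coeff k = -P.coeff (2 * n + 2 - k) := by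
    intro k hk
    have h := congrArg (fun q : ℝ[X] => q.coeff (2 * n + 2 - k + 1)) hPrefl
    simp only [coeff_reflect, coeff_neg, coeff_X_mul] at h
    rwa [revAt_le (by omega), show 2 * n + 3 - (2 * n + 2 - k + 1) = k from by omega] at h
  have hc2n3 : P.coeff (2 * n + 3) = 0 := by
    have h := congrArg (fun q : ℝ[X] => q.coeff 0) hPrefl
    simp only [coeff_reflect, coeff_neg, mul_coeff_zero, coeff_X_zero, zero_mul,
      neg_zero, revAt_zero] at h
    exact h
  have hPdeg2 : P.natDegree ≤ 2 * n + 2 := by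
    rw [natDegree_le_iff_coeff_eq_zero]
    intro k hk
    rcases eq_or_lt_of_le (Nat.succ_le_of_lt hk) with he | hgt
    · exact he ▸ hc2n3
    · exact coeff_eq_zero_of_natDegree_lt (lt_of_le_of_lt hPdeg3 hgt)
  -- constant coefficient
  have hS0 : S.coeff 0 = A 0 := by rw [hcoeffS]; simp
  have hG0 : G.coeff 0 = 1 := by rw [hcoeffG]; simp
  have hD0 : D.coeff 0 = 1 := by
    rw [hD, coeff_derivative, hcoeffG]
    norm_num
  have hT0 : T.coeff 0 = A 1 := by
    rw [hT, coeff_derivative, hcoeffS]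
    norm_num
  have hP0 : P.coeff 0 = -(A 1) := by
    rw [hP, hW, coeff_sub, mul_coeff_zero, mul_coeff_zero, coeff_sub, mul_coeff_zero,
      mul_coeff_zero, hS0, hG0, hD0, hT0, coeff_add, coeff_one_zero, coeff_X_zero]
    ring
  have hA1 : A 1 = A n := by
    rw [hA 1 (by omega), hA n (by omega), hm_sym 1 (by omega),
      show n + 1 - 1 = n from by omega]
  have hctop : P.coeff (2 * n + 2) = A n := by
    have h := hanti 0 (by omega)
    rw [hP0, Nat.sub_zero] at h
    linarith [hA1]
  have hApos : 0 < A n := by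
    rw [hA n (by omega)]
    have h1 : 0 < ∑ i ∈ Finset.range (n + 2), m i := by
      apply Finset.sum_pos
      · intro i hi
        exact hm_pos i (by simp at hi; omega)
      · exact ⟨0, by simp⟩
    have h2 : 0 < m n := hm_pos n (by omega)
    linarith
  have hdeg : P.natDegree = 2 * n + 2 :=
    le_antisymm hPdeg2 (le_natDegree_of_ne_zero (by rw [hctop]; exact ne_of_gt hApos))
  have hmid : P.coeff (n + 1) = 0 := by
    have h := hanti (n + 1) (by omega)
    rw [show 2 * n + 2 - (n + 1) = n + 1 from by omega] at h
    linarith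
  have heval : P.eval 1 = 0 := by
    have he : P.eval 1 = ∑ i ∈ Finset.range (2 * n + 3), P.coeff i := by
      rw [eval_eq_sum_range' (show P.natDegree < 2 * n + 3 from by omega) 1]
      simp
    have hs := Finset.sum_range_reflect (fun i => P.coeff i) (2 * n + 3)
    have hs2 : ∑ j ∈ Finset.range (2 * n + 3), P.coeff (2 * n + 3 - 1 - j)
        = -∑ j ∈ Finset.range (2 * n + 3), P.coeff j := by
      rw [← Finset.sum_neg_distrib]
      apply Finset.sum_congr rfl
      intro j hj
      have hjle : j ≤ 2 * n + 2 := by simp at hj; omega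
      have h := hanti j hjle
      rw [show 2 * n + 3 - 1 - j = 2 * n + 2 - j from by omega]
      linarith
    rw [hs2] at hs
    linarith
  exact ⟨hdeg, hctop, hApos, hanti, hmid, heval⟩
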